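/- Let (R, m) be a Noetherian local ring of Krull dimension one and M a finitely generated R-module. Then the following are equivalent: (1) h(M) < ∞; (2) ℓ_R(R/tr_R(M)) < ∞; (3) S⁻¹R is a direct summand of the S⁻¹R-module S⁻¹M, where S = R \ ∪{p : p ∈ Spec R, p ≠ m}; (4) for every prime ideal p ≠ m of R, the R_p-module M_p has a nonzero free direct summand (i.e. R_p is a direct summand of M_p). -/

import Mathlib

/-- The length of an `R`-module `M`: the supremum of lengths of strictly
increasing chains of submodules of `M`, valued in `ℕ∞`. -/
noncomputable def modLength (R M : Type*) [CommRing R] [AddCommGroup M] [Module R M] : ℕ∞ :=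
  ⨆ s : RelSeries {p : Submodule R M × Submodule R M | p.1 < p.2}, (s.length : ℕ∞)

/-- `h(M) = inf { ℓ_R(R/Im f) : f ∈ Hom_R(M,R) }`. -/
noncomputable def hInv (R M : Type*) [CommRing R] [AddCommGroup M] [Module R M] : ℕ∞ :=
  ⨅ f : M →ₗ[R] R, modLength R (R ⧸ LinearMap.range f)

/-- The trace ideal `tr_R(M) = Σ_{f ∈ Hom_R(M,R)} Im f`. -/
noncomputable def traceIdeal (R M : Type*) [CommRing R] [AddCommGroup M] [Module R M] : Ideal R :=
  ⨆ f : M →ₗ[R] R, LinearMap.range f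

section ModLengthBasic

variable {R M : Type*} [CommRing R] [AddCommGroup M] [Module R M]

lemma modLength_lt_top_of_bound (n : ℕ)
    (h : ∀ s : LTSeries (Submodule R M), s.length ≤ n) : modLength R M < ⊤ := by
  unfold modLength
  exact ENat.iSup_coe_lt_top.mpr ⟨n, by rintro x ⟨s, rfl⟩; exact h s⟩

lemma exists_bound_of_modLength_lt_top (h : modLength R M < ⊤) :
    ∃ n : ℕ, ∀ s : LTSeries (Submodule R M), s.length ≤ n := by
  unfold modLength at h
  obtain ⟨n, hn⟩ := ENat.iSup_coe_lt_top.mp h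
  exact ⟨n, fun s => hn (Set.mem_range_self s)⟩

lemma isArtinian_of_modLength_lt_top (h : modLength R M < ⊤) : IsArtinian R M := by
  obtain ⟨n, hn⟩ := exists_bound_of_modLength_lt_top h
  rw [isArtinian_iff, RelEmbedding.wellFounded_iff_isEmpty]
  by_contra hc
  rw [not_isEmpty_iff] at hc
  obtain ⟨f⟩ := hc
  have hanti : ∀ a b : ℕ, a < b → f b < f a := fun a b hab => f.map_rel_iff.mpr hab
  have hsm : StrictMono (fun i : Fin (n + 2) => f (n + 1 - (i : ℕ))) := by
    intro i j hij
    refine hanti _ _ ?_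
    have h1 : (i : ℕ) < (j : ℕ) := hij
    have h2 : (j : ℕ) < n + 2 := j.isLt
    omega
  have := hn (LTSeries.mk (n + 1) (fun i => f (n + 1 - (i : ℕ))) hsm)
  exact Nat.not_succ_le_self n this

lemma modLength_le_of_surjective {N : Type*} [AddCommGroup N] [Module R N]
    (π : M →ₗ[R] N) (hπ : Function.Surjective π) : modLength R N ≤ modLength R M := by
  unfold modLength
  refine iSup_le fun s => ?_
  have hs : StrictMono (fun P : Submodule R N => P.comap π) :=
    Monotone.strictMono_of_injective (fun _ _ h => Submodule.comap_mono h)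
      (Submodule.comap_injective_of_surjective hπ)
  exact le_iSup_of_le (LTSeries.map s (fun P : Submodule R N => P.comap π) hs) le_rfl

end ModLengthBasic

section FiniteLengthBound

variable {R M : Type*} [CommRing R] [AddCommGroup M] [Module R M]

lemma covby_top_of_simple {N : Submodule R M} [IsSimpleModule R (M ⧸ N)] : N ⋖ ⊤ := by
  constructor
  · refine lt_top_iff_ne_top.mpr fun h => ?_
    have h1 : Nontrivial (M ⧸ N) := IsSimpleModule.nontrivial R _
    have h2 : Subsingleton (M ⧸ N) := Submodule.Quotient.subsingleton_iff.mpr h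
    exact not_subsingleton_iff_nontrivial.mpr h1 h2
  · intro P hNP hPT
    rcases eq_bot_or_eq_top (Submodule.map N.mkQ P) with h1 | h1
    · obtain ⟨x, hxP, hxN⟩ := SetLike.exists_of_lt hNP
      have hx : N.mkQ x ∈ Submodule.map N.mkQ P := ⟨x, hxP, rfl⟩
      rw [h1] at hx
      simp only [Submodule.mem_bot, Submodule.mkQ_apply, Submodule.Quotient.mk_eq_zero] at hx
      exact hxN hx
    · have h2 := Submodule.comap_map_mkQ N P
      rw [h1, Submodule.comap_top] at h2
      rw [sup_eq_right.mpr hNP.le] at h2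
      exact absurd (h2.symm ▸ hPT) (lt_irrefl _)

lemma comap_strict_of_le {N P P' : Submodule R M} (h : P < P') (h' : P' ≤ N) :
    P.comap N.subtype < P'.comap N.subtype := by
  refine lt_of_le_of_ne (Submodule.comap_mono h.le) fun he => ?_
  obtain ⟨x, hxP', hxP⟩ := SetLike.exists_of_lt h
  have hxN : x ∈ N := h' hxP'
  have hmem : (⟨x, hxN⟩ : N) ∈ P'.comap N.subtype := hxP'
  rw [← he] at hmem
  exact hxP hmem

lemma comap_strict_of_not_le {N P P' : Submodule R M} (hcov : N ⋖ ⊤) (h : P < P')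
    (h1 : ¬ P ≤ N) : P.comap N.subtype < P'.comap N.subtype := by
  refine lt_of_le_of_ne (Submodule.comap_mono h.le) fun he => ?_
  have h2 : P' ⊓ N ≤ P ⊓ N := by
    rw [inf_comm P' N, inf_comm P N, ← Submodule.map_comap_subtype,
      ← Submodule.map_comap_subtype, he]
  have h3 : P ⊔ N < P' ⊔ N := sup_lt_sup_of_lt_of_inf_le_inf h h2
  have h4 : P ⊔ N = N := by
    by_contra h5
    have h6 : N < P ⊔ N := lt_of_le_of_ne le_sup_right (Ne.symm h5)
    exact hcov.2 h6 (lt_of_lt_of_le h3 le_top)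
  exact h1 (le_sup_left.trans h4.le)

theorem exists_bound_of_isFiniteLength {M : Type*} [AddCommGroup M] [Module R M]
    (h : IsFiniteLength R M) : ∃ n : ℕ, ∀ s : LTSeries (Submodule R M), s.length ≤ n := by
  induction' h with M iM₁ iM₂ iM₃ M i₁ i₂ N iS hfl ih
  · refine ⟨0, fun s => ?_⟩
    by_contra hc
    push_neg at hc
    have h01 : (0 : Fin (s.length + 1)) < Fin.last _ := by
      rw [Fin.lt_def]
      simpa using hc
    have := s.strictMono h01
    rw [Subsingleton.elim (s 0) (s (Fin.last _))] at this
    exact lt_irrefl _ this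
  · obtain ⟨n, hn⟩ := ih
    have hcov : N ⋖ ⊤ := covby_top_of_simple
    refine ⟨2 * n + 1, fun s => ?_⟩
    classical
    by_cases hall : ∀ i, s i ≤ N
    · have h1 : s.length ≤ n := hn (LTSeries.mk s.length (fun i => (s i).comap N.subtype)
        (fun i j hij => comap_strict_of_le (s.strictMono hij) (hall j)))
      omega
    push_neg at hall
    obtain ⟨i₀, hi₀⟩ := hall
    by_cases hall2 : ∀ i, ¬ s i ≤ N
    · have h1 : s.length ≤ n := hn (LTSeries.mk s.length (fun i => (s i).comap N.subtype)
        (fun i j hij => comap_strict_of_not_le hcov (s.strictMono hij) (hall2 i)))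
      omega
    push_neg at hall2
    obtain ⟨i₁, hi₁⟩ := hall2
    -- least index whose value is not ≤ N
    have hex : ∃ t : ℕ, ∃ ht : t < s.length + 1, ¬ s ⟨t, ht⟩ ≤ N := ⟨i₀, i₀.isLt, by simpa using hi₀⟩
    set j := Nat.find hex with hj
    obtain ⟨hjlt, hjN⟩ := Nat.find_spec hex
    have hjmin : ∀ t (ht : t < s.length + 1), t < j → s ⟨t, ht⟩ ≤ N := by
      intro t ht htj
      have := Nat.find_min hex htj
      push_neg at this
      exact this ht
    have hjge : ∀ t (ht : t < s.length + 1), j ≤ t → ¬ s ⟨t, ht⟩ ≤ N := by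
      intro t ht hjt hle
      refine hjN (le_trans ?_ hle)
      exact s.monotone (by rw [Fin.le_def]; exact hjt)
    have hjpos : 0 < j := by
      rcases Nat.eq_zero_or_pos j with h0 | h0
      · exfalso
        have h0' : Nat.find hex = 0 := hj.symm.trans h0
        refine hjN (le_trans ?_ hi₁)
        refine s.monotone ?_
        rw [Fin.le_def]
        show Nat.find hex ≤ (i₁ : ℕ); omega
      · exact h0
    have hjle : j ≤ s.length := by omega
    -- first chain : indices 0 .. j-1
    have hc1 : j - 1 ≤ n := hn (LTSeries.mk (j - 1)
      (fun i => (s ⟨(i : ℕ), by have := i.isLt; omega⟩).comap N.subtype)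
      (by
        intro i i' hii
        have hlt : (i : ℕ) < (i' : ℕ) := hii
        refine comap_strict_of_le (s.strictMono ?_) (hjmin _ _ (by have := i'.isLt; omega))
        rw [Fin.lt_def]
        exact hlt))
    -- second chain : indices j .. s.length
    have hc2 : s.length - j ≤ n := hn (LTSeries.mk (s.length - j)
      (fun i => (s ⟨j + (i : ℕ), by have := i.isLt; omega⟩).comap N.subtype)
      (by
        intro i i' hii
        have hlt : (i : ℕ) < (i' : ℕ) := hii
        refine comap_strict_of_not_le hcov (s.strictMono ?_) (hjge _ _ (by omega))
        rw [Fin.lt_def]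
        simp only []
        omega))
    omega

end FiniteLengthBound

section ArtinianTools

lemma isArtinian_of_surjAlg {R S N : Type*} [CommRing R] [CommRing S] [Algebra R S]
    [AddCommGroup N] [Module R N] [Module S N] [IsScalarTower R S N]
    (hs : Function.Surjective (algebraMap R S)) [IsArtinian S N] : IsArtinian R N := by
  rw [isArtinian_iff]
  have hwf : WellFounded ((· < ·) : Submodule S N → Submodule S N → Prop) :=
    (isArtinian_iff S N).mp inferInstance
  let e : Submodule R N → Submodule S N := fun P =>
    { carrier := P
      add_mem' := fun h1 h2 => P.add_mem h1 h2
      zero_mem' := P.zero_mem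
      smul_mem' := by
        intro c x hx
        obtain ⟨r, rfl⟩ := hs c
        rw [algebraMap_smul]
        exact P.smul_mem r hx }
  have he : ∀ P Q : Submodule R N, P < Q → e P < e Q := by
    intro P Q h
    rw [SetLike.lt_iff_le_and_exists] at h ⊢
    obtain ⟨h1, x, hx1, hx2⟩ := h
    exact ⟨h1, x, hx1, hx2⟩
  exact Subrelation.wf (fun {P Q} h => he P Q h) (InvImage.wf e hwf)

lemma isArtinian_of_torsionBy_maximalIdeal {R N : Type*} [CommRing R] [IsLocalRing R]
    [AddCommGroup N] [Module R N] [Module.Finite R N]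
    (h : ∀ r ∈ IsLocalRing.maximalIdeal R, ∀ x : N, r • x = 0) : IsArtinian R N := by
  have ht : Module.IsTorsionBySet R N ((IsLocalRing.maximalIdeal R : Ideal R) : Set R) :=
    fun x a => h a.1 a.2 x
  letI : Module (R ⧸ IsLocalRing.maximalIdeal R) N := ht.module
  haveI : IsScalarTower R (R ⧸ IsLocalRing.maximalIdeal R) N := ht.isScalarTower
  haveI : Module.Finite (R ⧸ IsLocalRing.maximalIdeal R) N :=
    Module.Finite.of_restrictScalars_finite R _ _
  letI : Field (R ⧸ IsLocalRing.maximalIdeal R) :=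
    Ideal.Quotient.field (IsLocalRing.maximalIdeal R)
  haveI : IsArtinian (R ⧸ IsLocalRing.maximalIdeal R) N := isArtinian_of_fg_of_artinian'
  refine isArtinian_of_surjAlg (S := R ⧸ IsLocalRing.maximalIdeal R) ?_
  rw [Ideal.Quotient.algebraMap_eq]
  exact Ideal.Quotient.mk_surjective

lemma quotient_pow_maximalIdeal_artinian {R : Type*} [CommRing R] [IsNoetherianRing R]
    [IsLocalRing R] : ∀ n : ℕ, IsArtinian R (R ⧸ (IsLocalRing.maximalIdeal R ^ n : Ideal R)) := by
  intro n
  induction n with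
  | zero =>
    rw [pow_zero, Ideal.one_eq_top]
    haveI : Subsingleton (R ⧸ (⊤ : Ideal R)) :=
      Submodule.Quotient.subsingleton_iff.mpr rfl
    infer_instance
  | succ n ihn =>
    set m : Ideal R := IsLocalRing.maximalIdeal R with hm
    set X : Submodule R (R ⧸ (m ^ (n + 1) : Ideal R)) :=
      Submodule.map (m ^ (n + 1) : Ideal R).mkQ (m ^ n : Ideal R) with hX
    rw [isArtinian_iff_submodule_quotient X]
    constructor
    · haveI : IsNoetherian R (R ⧸ (m ^ (n + 1) : Ideal R)) := inferInstance
      haveI : Module.Finite R X := ⟨IsNoetherian.noetherian ⊤⟩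
      refine isArtinian_of_torsionBy_maximalIdeal ?_
      rintro r hr ⟨x, hx⟩
      obtain ⟨y, hy, rfl⟩ := hx
      refine Subtype.ext ?_
      have hmem : r * y ∈ (m ^ (n + 1) : Ideal R) := by
        rw [pow_succ, mul_comm r y]
        exact Ideal.mul_mem_mul hy hr
      show r • ((m ^ (n + 1) : Ideal R).mkQ y) = 0
      rw [← map_smul, smul_eq_mul, Submodule.mkQ_apply, Submodule.Quotient.mk_eq_zero]
      exact hmem
    · have hle : (m ^ (n + 1) : Ideal R) ≤ (m ^ n : Ideal R) :=
        Ideal.pow_le_pow_right (by omega)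
      have e := Submodule.quotientQuotientEquivQuotient
        (m ^ (n + 1) : Ideal R) (m ^ n : Ideal R) hle
      exact isArtinian_of_surjective _ e.symm.toLinearMap e.symm.surjective

end ArtinianTools

section MainColength

variable {R : Type*} [CommRing R] [IsNoetherianRing R] [IsLocalRing R]

lemma modLength_quotient_lt_top_iff (hdim : ringKrullDim R = 1) (I : Ideal R) :
    modLength R (R ⧸ I) < ⊤ ↔
      ∀ p : Ideal R, p.IsPrime → p ≠ IsLocalRing.maximalIdeal R → ¬ I ≤ p := by
  constructor
  · intro h p hp hpm hIp
    haveI := hp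
    haveI : IsArtinian R (R ⧸ I) := isArtinian_of_modLength_lt_top h
    haveI : IsArtinianRing (R ⧸ I) := isArtinian_of_tower R inferInstance
    have hker : RingHom.ker (Ideal.Quotient.mk I) ≤ p := by
      rw [Ideal.mk_ker]; exact hIp
    haveI hmapp : (Ideal.map (Ideal.Quotient.mk I) p).IsPrime :=
      Ideal.map_isPrime_of_surjective Ideal.Quotient.mk_surjective hker
    haveI hmax : (Ideal.map (Ideal.Quotient.mk I) p).IsMaximal :=
      IsArtinianRing.isMaximal_of_isPrime _
    have hcomap : Ideal.comap (Ideal.Quotient.mk I) (Ideal.map (Ideal.Quotient.mk I) p) = p := by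
      rw [Ideal.comap_map_of_surjective _ Ideal.Quotient.mk_surjective]
      rw [← RingHom.ker_eq_comap_bot, Ideal.mk_ker]
      exact sup_eq_left.mpr hIp
    have hpmax : p.IsMaximal := by
      rw [← hcomap]
      exact Ideal.comap_isMaximal_of_surjective _ Ideal.Quotient.mk_surjective
    exact hpm (IsLocalRing.eq_maximalIdeal hpmax)
  · intro h
    by_cases hI : I = ⊤
    · haveI : Subsingleton (R ⧸ I) := Submodule.Quotient.subsingleton_iff.mpr hI
      obtain ⟨n, hn⟩ := exists_bound_of_isFiniteLength (R := R) (M := R ⧸ I)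
        IsFiniteLength.of_subsingleton
      exact modLength_lt_top_of_bound n hn
    · have hrad : I.radical = IsLocalRing.maximalIdeal R := by
        rw [Ideal.radical_eq_sInf]
        apply le_antisymm
        · exact sInf_le ⟨IsLocalRing.le_maximalIdeal hI,
            (IsLocalRing.maximalIdeal.isMaximal R).isPrime⟩
        · refine le_sInf fun J hJ => ?_
          by_cases hJm : J = IsLocalRing.maximalIdeal R
          · exact hJm ▸ le_rfl
          · exact absurd hJ.1 (h J hJ.2 hJm)
      obtain ⟨n, hpow⟩ := Ideal.exists_radical_pow_le_of_fg I
        (by rw [hrad]; exact IsNoetherian.noetherian _)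
      rw [hrad] at hpow
      haveI : IsArtinian R (R ⧸ (IsLocalRing.maximalIdeal R ^ n : Ideal R)) :=
        quotient_pow_maximalIdeal_artinian n
      have hsurj : Function.Surjective
          (Submodule.mapQ (IsLocalRing.maximalIdeal R ^ n : Ideal R) I LinearMap.id
            (by simpa using hpow)) := by
        intro x
        obtain ⟨y, rfl⟩ := Submodule.Quotient.mk_surjective I x
        refine ⟨Submodule.Quotient.mk y, ?_⟩
        rw [Submodule.mapQ_apply]
        rfl
      haveI : IsArtinian R (R ⧸ I) := isArtinian_of_surjective _ _ hsurj
      haveI : IsNoetherian R (R ⧸ I) := inferInstance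
      obtain ⟨b, hb⟩ := exists_bound_of_isFiniteLength (R := R) (M := R ⧸ I)
        (isFiniteLength_iff_isNoetherian_isArtinian.mpr ⟨‹_›, ‹_›⟩)
      exact modLength_lt_top_of_bound b hb

lemma no_two_chain (hdim : ringKrullDim R = 1)
    {q p : Ideal R} (hq : q.IsPrime) (hp : p.IsPrime) (hqp : q < p)
    (hpm : p ≠ IsLocalRing.maximalIdeal R) : False := by
  have hpmlt : p < IsLocalRing.maximalIdeal R :=
    lt_of_le_of_ne (IsLocalRing.le_maximalIdeal hp.ne_top) hpm
  let x0 : PrimeSpectrum R := ⟨q, hq⟩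
  let x1 : PrimeSpectrum R := ⟨p, hp⟩
  let x2 : PrimeSpectrum R := ⟨IsLocalRing.maximalIdeal R,
    (IsLocalRing.maximalIdeal.isMaximal R).isPrime⟩
  have h01 : x0 < x1 := hqp
  have h12 : x1 < x2 := hpmlt
  let c : LTSeries (PrimeSpectrum R) :=
    RelSeries.cons (RelSeries.cons (RelSeries.singleton _ x2) x1 h12) x0 h01
  have hlen := Order.LTSeries.length_le_krullDim c
  have hc : c.length = 2 := rfl
  rw [hc] at hlen
  rw [show Order.krullDim (PrimeSpectrum R) = ringKrullDim R from rfl, hdim] at hlen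
  norm_num at hlen

end MainColength

section Avoidance

variable {R M : Type*} [CommRing R] [AddCommGroup M] [Module R M]

lemma exists_hom_avoiding (T : Finset (Ideal R))
    (hprime : ∀ p ∈ T, p.IsPrime)
    (hincomp : ∀ p ∈ T, ∀ q ∈ T, p ≤ q → p = q)
    (hex : ∀ p ∈ T, ∃ f : M →ₗ[R] R, ¬ LinearMap.range f ≤ p) :
    ∃ f : M →ₗ[R] R, ∀ p ∈ T, ¬ LinearMap.range f ≤ p := by
  classical
  induction T using Finset.induction_on with
  | empty => exact ⟨0, by simp⟩
  | @insert p T hpT ih =>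
    obtain ⟨g, hg⟩ := ih (fun q hq => hprime q (Finset.mem_insert_of_mem hq))
      (fun q hq q' hq' => hincomp q (Finset.mem_insert_of_mem hq) q'
        (Finset.mem_insert_of_mem hq'))
      (fun q hq => hex q (Finset.mem_insert_of_mem hq))
    have hpp : p.IsPrime := hprime p (Finset.mem_insert_self _ _)
    by_cases hgp : LinearMap.range g ≤ p
    · obtain ⟨h, hh⟩ := hex p (Finset.mem_insert_self _ _)
      have hTinf : ¬ (T.inf id ≤ p) := by
        intro hle
        obtain ⟨q, hq, hqle⟩ := (Ideal.IsPrime.inf_le' hpp).mp hle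
        have : q = p := hincomp q (Finset.mem_insert_of_mem hq) p
          (Finset.mem_insert_self _ _) hqle
        exact hpT (this ▸ hq)
      obtain ⟨c, hcT, hcp⟩ := SetLike.not_le_iff_exists.mp hTinf
      refine ⟨g + c • h, ?_⟩
      intro q hq
      rcases Finset.mem_insert.mp hq with rfl | hqT
      · obtain ⟨y, hy, hyq⟩ := SetLike.not_le_iff_exists.mp hh
        obtain ⟨x, rfl⟩ := hy
        intro hle
        have h1 : (g + c • h) x ∈ q := hle ⟨x, rfl⟩
        have h2 : g x ∈ q := hgp ⟨x, rfl⟩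
        have h3 : c * h x ∈ q := by
          have h4 := q.sub_mem h1 h2
          simpa [smul_eq_mul] using h4
        rcases hpp.mem_or_mem h3 with hc' | hh'
        · exact hcp hc'
        · exact hyq hh'
      · intro hle
        obtain ⟨y, hy, hyq⟩ := SetLike.not_le_iff_exists.mp (hg q hqT)
        obtain ⟨x, rfl⟩ := hy
        have hcq : c ∈ q := (Finset.inf_le (f := id) hqT : T.inf id ≤ q) hcT
        have h1 : (g + c • h) x ∈ q := hle ⟨x, rfl⟩
        have h2 : c * h x ∈ q := Ideal.mul_mem_right _ _ hcq
        have h3 : g x ∈ q := by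
          have h4 := q.sub_mem h1 h2
          simpa [smul_eq_mul] using h4
        exact hyq h3
    · refine ⟨g, ?_⟩
      intro q hq
      rcases Finset.mem_insert.mp hq with rfl | hqT
      · exact hgp
      · exact hg q hqT

end Avoidance

section Localize

variable {R M : Type*} [CommRing R] [AddCommGroup M] [Module R M]

lemma split_of_unit_image (S' : Submonoid R) (f : M →ₗ[R] R) (m₀ : M) (hm : f m₀ ∈ S') :
    ∃ (F : LocalizedModule S' M →ₗ[Localization S'] Localization S')
      (g : Localization S' →ₗ[Localization S'] LocalizedModule S' M),
      F ∘ₗ g = LinearMap.id := by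
  set A := Localization S'
  set Φ := IsLocalizedModule.mapExtendScalars S' (LocalizedModule.mkLinearMap S' M)
      (Algebra.linearMap R A) A with hΦ
  have hu : IsUnit (algebraMap R A (f m₀)) := IsLocalization.map_units A ⟨f m₀, hm⟩
  refine ⟨Φ f, LinearMap.toSpanSingleton A _
    (((hu.unit⁻¹ : Aˣ) : A) • LocalizedModule.mk m₀ 1), ?_⟩
  apply LinearMap.ext_ring
  simp only [LinearMap.coe_comp, Function.comp_apply, LinearMap.id_apply,
    LinearMap.toSpanSingleton_apply, one_smul]
  rw [LinearMap.toSpanSingleton_apply_one, map_smul]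
  have hval : (Φ f) (LocalizedModule.mk m₀ 1) = algebraMap R A (f m₀) := by
    rw [show LocalizedModule.mk m₀ (1 : S') = LocalizedModule.mkLinearMap S' M m₀ from
      (LocalizedModule.mkLinearMap_apply S' M m₀).symm]
    rw [hΦ, IsLocalizedModule.mapExtendScalars_apply_apply, IsLocalizedModule.map_apply]
    rfl
  rw [hval, smul_eq_mul, IsUnit.val_inv_mul]

lemma not_trace_le_of_split [IsNoetherianRing R] [Module.Finite R M]
    (S' : Submonoid R) (p : Ideal R) (hp : p.IsPrime)
    (hd : ∀ x ∈ p, x ∉ S')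
    (F : LocalizedModule S' M →ₗ[Localization S'] Localization S')
    (g : Localization S' →ₗ[Localization S'] LocalizedModule S' M)
    (hFg : F ∘ₗ g = LinearMap.id) : ¬ traceIdeal R M ≤ p := by
  classical
  haveI : Module.FinitePresentation R M := Module.finitePresentation_of_finite R M
  set A := Localization S' with hA
  set Φ := IsLocalizedModule.mapExtendScalars S' (LocalizedModule.mkLinearMap S' M)
      (Algebra.linearMap R A) A with hΦ
  obtain ⟨⟨h, s⟩, hhs⟩ := IsLocalizedModule.surj S' Φ F
  intro hT
  have hrange : LinearMap.range h ≤ p :=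
    le_trans (le_iSup (fun f : M →ₗ[R] R => LinearMap.range f) h) hT
  have hdisj : Disjoint (S' : Set R) (p : Set R) :=
    Set.disjoint_left.mpr fun x hxS hxp => hd x hxp hxS
  have hprime' := IsLocalization.isPrime_of_isPrime_disjoint S' A p hp hdisj
  have hne : Ideal.map (algebraMap R A) p ≠ ⊤ := hprime'.ne_top
  have hmk1 : ∀ m : M, (Φ h) (LocalizedModule.mk m 1) = algebraMap R A (h m) := by
    intro m
    rw [show LocalizedModule.mk m (1 : S') = LocalizedModule.mkLinearMap S' M m from
      (LocalizedModule.mkLinearMap_apply S' M m).symm]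
    rw [hΦ, IsLocalizedModule.mapExtendScalars_apply_apply, IsLocalizedModule.map_apply]
    rfl
  have hmem : ∀ x, (Φ h) x ∈ Ideal.map (algebraMap R A) p := by
    intro x
    induction x using LocalizedModule.induction_on with
    | _ m t =>
      have h1 : (algebraMap R A (t : R)) • (Φ h) (LocalizedModule.mk m t)
          = (Φ h) (LocalizedModule.mk m 1) := by
        rw [← map_smul]
        congr 1
        rw [algebraMap_smul, LocalizedModule.smul'_mk, ← Submonoid.smul_def,
          LocalizedModule.mk_cancel]
      have h2 : (Φ h) (LocalizedModule.mk m 1) ∈ Ideal.map (algebraMap R A) p := by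
        rw [hmk1 m]
        exact Ideal.mem_map_of_mem _ (hrange ⟨m, rfl⟩)
      rw [← h1] at h2
      rw [smul_eq_mul] at h2
      rcases hprime'.mem_or_mem h2 with ht' | hx'
      · exfalso
        exact hne (Ideal.eq_top_of_isUnit_mem _ ht' (IsLocalization.map_units A t))
      · exact hx'
  have hs_unit : IsUnit (algebraMap R A (s : R)) := IsLocalization.map_units A s
  have h1 : (Φ h) (g ((hs_unit.unit⁻¹ : Aˣ) : A)) = 1 := by
    rw [← hhs]
    have h2 : F (g ((hs_unit.unit⁻¹ : Aˣ) : A)) = ((hs_unit.unit⁻¹ : Aˣ) : A) :=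
      LinearMap.congr_fun hFg _
    rw [LinearMap.smul_apply, h2, Submonoid.smul_def, Algebra.smul_def, IsUnit.mul_val_inv]
  have h3 := hmem (g ((hs_unit.unit⁻¹ : Aˣ) : A))
  rw [h1] at h3
  exact hne ((Ideal.eq_top_iff_one _).mpr h3)

end Localize

/-- For a one-dimensional Noetherian local ring `(R, m)` and a finitely
generated `R`-module `M`, the following are equivalent:
(1) `h(M) < ∞`; (2) `ℓ_R(R/tr_R(M)) < ∞`; (3) `S⁻¹R` is a direct summand of `S⁻¹M`, where
`S = R \ ⋃ {p prime, p ≠ m}`; (4) `M_p` has a nonzero free direct summand for every prime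
`p ≠ m`. -/
theorem stmt1 (R M : Type*) [CommRing R] [IsNoetherianRing R] [IsLocalRing R]
    (hdim : ringKrullDim R = 1)
    [AddCommGroup M] [Module R M] [Module.Finite R M]
    (S : Submonoid R)
    (hS : (S : Set R) =
      {x : R | ∀ p : Ideal R, p.IsPrime → p ≠ IsLocalRing.maximalIdeal R → x ∉ p}) :
    List.TFAE
      [ hInv R M < ⊤,
        modLength R (R ⧸ traceIdeal R M) < ⊤,
        ∃ (f : LocalizedModule S M →ₗ[Localization S] Localization S)
          (g : Localization S →ₗ[Localization S] LocalizedModule S M),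
          f ∘ₗ g = LinearMap.id,
        ∀ (p : Ideal R) [p.IsPrime], p ≠ IsLocalRing.maximalIdeal R →
          ∃ (f : LocalizedModule p.primeCompl M →ₗ[Localization.AtPrime p] Localization.AtPrime p)
            (g : Localization.AtPrime p →ₗ[Localization.AtPrime p] LocalizedModule p.primeCompl M),
            f ∘ₗ g = LinearMap.id ] := by
  classical
  have hPsub : {p : Ideal R | p.IsPrime ∧ p ≠ IsLocalRing.maximalIdeal R} ⊆ minimalPrimes R := by
    rintro p ⟨hp, hpm⟩
    refine ⟨⟨hp, bot_le⟩, ?_⟩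
    rintro q ⟨hq, -⟩ hqp
    by_contra hn
    exact no_two_chain hdim hq hp (lt_of_le_not_ge hqp hn) hpm
  have hPfin : Set.Finite {p : Ideal R | p.IsPrime ∧ p ≠ IsLocalRing.maximalIdeal R} :=
    (minimalPrimes.finite_of_isNoetherianRing R).subset hPsub
  set T : Finset (Ideal R) := hPfin.toFinset with hT
  have hmemT : ∀ p : Ideal R, p ∈ T ↔ p.IsPrime ∧ p ≠ IsLocalRing.maximalIdeal R := by
    intro p
    rw [hT, Set.Finite.mem_toFinset]
    rfl
  have hincomp : ∀ p ∈ T, ∀ q ∈ T, p ≤ q → p = q := by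
    intro p hp q hq hpq
    by_contra hne
    exact no_two_chain hdim ((hmemT p).mp hp).1 ((hmemT q).mp hq).1
      (lt_of_le_of_ne hpq hne) ((hmemT q).mp hq).2
  -- from (2) obtain a single functional avoiding all non-maximal primes
  have aux : modLength R (R ⧸ traceIdeal R M) < ⊤ →
      ∃ f : M →ₗ[R] R, ∀ p : Ideal R, p.IsPrime → p ≠ IsLocalRing.maximalIdeal R →
        ¬ LinearMap.range f ≤ p := by
    intro h2
    have hTr := (modLength_quotient_lt_top_iff hdim (traceIdeal R M)).mp h2
    have hex : ∀ p ∈ T, ∃ f : M →ₗ[R] R, ¬ LinearMap.range f ≤ p := by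
      intro p hp
      obtain ⟨hp1, hp2⟩ := (hmemT p).mp hp
      by_contra hc
      push_neg at hc
      refine hTr p hp1 hp2 ?_
      unfold traceIdeal
      exact iSup_le hc
    obtain ⟨f, hf⟩ := exists_hom_avoiding T (fun p hp => ((hmemT p).mp hp).1) hincomp hex
    exact ⟨f, fun p hp hpm => hf p ((hmemT p).mpr ⟨hp, hpm⟩)⟩
  tfae_have 1 → 2
  | h1 => by
    have h1' : ∃ f : M →ₗ[R] R, modLength R (R ⧸ LinearMap.range f) < ⊤ := by
      unfold hInv at h1
      exact iInf_lt_iff.mp h1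
    obtain ⟨f, hf⟩ := h1'
    have hle : LinearMap.range f ≤ traceIdeal R M :=
      le_iSup (fun f : M →ₗ[R] R => LinearMap.range f) f
    have hsurj : Function.Surjective
        (Submodule.mapQ (LinearMap.range f) (traceIdeal R M) LinearMap.id
          (by simpa using hle)) := by
      intro x
      obtain ⟨y, rfl⟩ := Submodule.Quotient.mk_surjective _ x
      refine ⟨Submodule.Quotient.mk y, ?_⟩
      rw [Submodule.mapQ_apply]
      rfl
    exact lt_of_le_of_lt (modLength_le_of_surjective _ hsurj) hf
  tfae_have 2 → 1
  | h2 => by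
    obtain ⟨f, hf⟩ := aux h2
    have : modLength R (R ⧸ LinearMap.range f) < ⊤ :=
      (modLength_quotient_lt_top_iff hdim _).mpr hf
    unfold hInv
    exact iInf_lt_iff.mpr ⟨f, this⟩
  tfae_have 2 → 3
  | h2 => by
    obtain ⟨f, hf⟩ := aux h2
    have hsub : ¬ ((LinearMap.range f : Ideal R) : Set R) ⊆ ⋃ p ∈ (T : Set (Ideal R)), ↑p := by
      intro hcon
      obtain ⟨p, hpT, hple⟩ := (Ideal.subset_union_prime (⊥ : Ideal R) ⊥
        (fun i hi _ _ => ((hmemT i).mp hi).1)).mp hcon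
      exact hf p ((hmemT p).mp hpT).1 ((hmemT p).mp hpT).2 hple
    obtain ⟨t, htr, htn⟩ := Set.not_subset.mp hsub
    obtain ⟨m₀, rfl⟩ := LinearMap.mem_range.mp (SetLike.mem_coe.mp htr)
    have htS : f m₀ ∈ S := by
      rw [← SetLike.mem_coe, hS]
      intro p hp hpm hmem
      exact htn (Set.mem_biUnion ((hmemT p).mpr ⟨hp, hpm⟩) hmem)
    exact split_of_unit_image S f m₀ htS
  tfae_have 3 → 2
  | h3 => by
    obtain ⟨F, g, hFg⟩ := h3
    refine (modLength_quotient_lt_top_iff hdim _).mpr ?_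
    intro p hp hpm
    refine not_trace_le_of_split S p hp ?_ F g hFg
    intro x hxp hxS
    rw [← SetLike.mem_coe, hS] at hxS
    exact hxS p hp hpm hxp
  tfae_have 2 → 4
  | h2 => by
    intro p hp hpm
    have hTr := (modLength_quotient_lt_top_iff hdim (traceIdeal R M)).mp h2 p hp hpm
    have hex : ∃ f : M →ₗ[R] R, ¬ LinearMap.range f ≤ p := by
      by_contra hc
      push_neg at hc
      refine hTr ?_
      unfold traceIdeal
      exact iSup_le hc
    obtain ⟨f, hf⟩ := hex
    obtain ⟨y, hy, hyp⟩ := SetLike.not_le_iff_exists.mp hf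
    obtain ⟨m₀, rfl⟩ := hy
    exact split_of_unit_image p.primeCompl f m₀ hyp
  tfae_have 4 → 2
  | h4 => by
    refine (modLength_quotient_lt_top_iff hdim _).mpr ?_
    intro p hp hpm
    haveI := hp
    obtain ⟨F, g, hFg⟩ := h4 p hpm
    exact not_trace_le_of_split p.primeCompl p hp (fun x hxp hxS => hxS hxp) F g hFg
  tfae_finish
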